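/- If L1 is a language accepted by a complete DFA with exactly 1 state and L2 is accepted by a complete DFA with n ≥ 1 states, then L1^R · L2 is accepted by a complete DFA with at most 2^(n-1) states; moreover this bound is tight in the worst case. -/

import Mathlib

open Computability

/-- The reversal of a language. -/
def revLang {α : Type} (L : Language α) : Language α := {w | w.reverse ∈ L}

-- card of finsets containing a fixed element
noncomputable def finsetMemEquiv {γ : Type} [Fintype γ] [DecidableEq γ] (a : γ) :
    {S : Finset γ // a ∈ S} ≃ Finset {x : γ // x ≠ a} where
  toFun S := (S.1.erase a).subtype (fun x => x ≠ a)
  invFun T := ⟨insert a (T.map ⟨Subtype.val, Subtype.val_injective⟩), Finset.mem_insert_self _ _⟩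
  left_inv S := by
    ext x
    simp only [Finset.mem_insert, Finset.mem_map, Finset.mem_subtype, Finset.mem_erase,
      Function.Embedding.coeFn_mk]
    constructor
    · rintro (rfl | ⟨y, hy, rfl⟩)
      · exact S.2
      · exact hy.2
    · intro hx
      by_cases h : x = a
      · exact Or.inl h
      · exact Or.inr ⟨⟨x, h⟩, ⟨h, hx⟩, rfl⟩
  right_inv T := by
    ext x
    simp only [Finset.mem_subtype, Finset.mem_erase, Finset.mem_insert, Finset.mem_map,
      Function.Embedding.coeFn_mk]
    constructor
    · rintro ⟨h1, (h2 | ⟨y, hy, h3⟩)⟩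
      · exact absurd h2 h1
      · rwa [show y = x from Subtype.ext h3] at hy
    · intro hx
      exact ⟨x.2, Or.inr ⟨x, hx, rfl⟩⟩

theorem card_finset_mem {γ : Type} [Fintype γ] [DecidableEq γ] (a : γ) :
    Fintype.card {S : Finset γ // a ∈ S} = 2 ^ (Fintype.card γ - 1) := by
  rw [Fintype.card_congr (finsetMemEquiv a), Fintype.card_finset]
  congr 1
  rw [Fintype.card_subtype_compl (p := fun x => x = a), Fintype.card_subtype_eq]
variable {α σ₂ : Type} [Fintype σ₂] [DecidableEq σ₂]

/-- DFA for Σ* · B.accepts via suffix-set construction. -/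
def suffDFA (B : DFA α σ₂) : DFA α {S : Finset σ₂ // B.start ∈ S} where
  step S a := ⟨insert B.start (S.1.image (fun q => B.step q a)), Finset.mem_insert_self _ _⟩
  start := ⟨{B.start}, Finset.mem_singleton_self _⟩
  accept := {S | ∃ q ∈ S.1, q ∈ B.accept}

theorem mem_suffDFA_evalFrom (B : DFA α σ₂) (w : List α) :
    ∀ (S : Finset σ₂) (h : B.start ∈ S) (q : σ₂),
    q ∈ ((suffDFA B).evalFrom ⟨S, h⟩ w).1 ↔
      (∃ p ∈ S, B.evalFrom p w = q) ∨ ∃ v, v <:+ w ∧ B.evalFrom B.start v = q := by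
  induction w with
  | nil =>
    intro S h q
    simp only [DFA.evalFrom_nil, List.suffix_nil]
    constructor
    · intro hq; exact Or.inl ⟨q, hq, rfl⟩
    · rintro (⟨p, hp, rfl⟩ | ⟨v, rfl, rfl⟩)
      · exact hp
      · exact h
  | cons a w ih =>
    intro S h q
    have : (suffDFA B).evalFrom ⟨S, h⟩ (a :: w) =
        (suffDFA B).evalFrom ((suffDFA B).step ⟨S, h⟩ a) w := rfl
    rw [this, ih]
    simp only [suffDFA, Finset.mem_insert, Finset.mem_image]
    constructor
    · rintro (⟨p, (rfl | ⟨r, hr, rfl⟩), hpq⟩ | ⟨v, hv, hq⟩)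
      · exact Or.inr ⟨w, List.suffix_cons a w, hpq⟩
      · exact Or.inl ⟨r, hr, hpq⟩
      · exact Or.inr ⟨v, hv.trans (List.suffix_cons a w), hq⟩
    · rintro (⟨p, hp, hq⟩ | ⟨v, hv, hq⟩)
      · exact Or.inl ⟨B.step p a, Or.inr ⟨p, hp, rfl⟩, hq⟩
      · rcases List.suffix_cons_iff.mp hv with rfl | hv'
        · exact Or.inl ⟨B.step B.start a, Or.inr ⟨B.start, h, rfl⟩, hq⟩
        · exact Or.inr ⟨v, hv', hq⟩

theorem suffDFA_accepts (B : DFA α σ₂) :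
    (suffDFA B).accepts = (⊤ : Language α) * B.accepts := by
  ext w
  rw [DFA.mem_accepts]
  constructor
  · rintro ⟨q, hq, hacc⟩
    rw [DFA.eval, mem_suffDFA_evalFrom] at hq
    rcases hq with ⟨p, hp, rfl⟩ | ⟨v, ⟨u, rfl⟩, rfl⟩
    · have : p = B.start := by simpa [suffDFA] using hp
      subst this
      exact ⟨[], trivial, w, hacc, by simp⟩
    · exact ⟨u, trivial, v, hacc, rfl⟩
  · rintro ⟨u, -, v, hv, rfl⟩
    refine ⟨B.evalFrom B.start v, ?_, hv⟩
    rw [DFA.eval, mem_suffDFA_evalFrom]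
    exact Or.inr ⟨v, ⟨u, rfl⟩, rfl⟩

/-- set of states reachable on suffixes -/
def reach {α σ : Type} (B : DFA α σ) (w : List α) : Set σ :=
  {q | ∃ v, v <:+ w ∧ B.evalFrom B.start v = q}

theorem mem_top_mul_accepts {α σ : Type} (B : DFA α σ) (w : List α) :
    w ∈ (⊤ : Language α) * B.accepts ↔ ∃ x ∈ reach B w, x ∈ B.accept := by
  constructor
  · rintro ⟨u, -, v, hv, rfl⟩
    exact ⟨B.evalFrom B.start v, ⟨v, ⟨u, rfl⟩, rfl⟩, hv⟩
  · rintro ⟨x, ⟨v, ⟨u, rfl⟩, rfl⟩, hx⟩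
    exact ⟨u, trivial, v, hx, rfl⟩

theorem reach_nil {α σ : Type} (B : DFA α σ) : reach B [] = {B.start} := by
  ext q
  constructor
  · rintro ⟨v, hv, rfl⟩
    rw [List.suffix_nil.mp hv]; rfl
  · rintro rfl
    exact ⟨[], List.nil_suffix, rfl⟩

theorem suffix_append_singleton {α : Type} {v w : List α} {a : α} (h : v <:+ w ++ [a]) :
    v = [] ∨ ∃ u, u <:+ w ∧ v = u ++ [a] := by
  rcases List.eq_nil_or_concat v with rfl | ⟨u, b, rfl⟩
  · exact Or.inl rfl
  · obtain ⟨t, ht⟩ := h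
    simp only [List.concat_eq_append] at ht ⊢
    rw [← List.append_assoc] at ht
    obtain ⟨h1, h2⟩ := List.append_inj' ht rfl
    obtain rfl : b = a := by simpa using h2
    exact Or.inr ⟨u, ⟨t, h1⟩, rfl⟩

theorem reach_append_singleton {α σ : Type} (B : DFA α σ) (w : List α) (a : α) :
    reach B (w ++ [a]) = insert B.start ((fun q => B.step q a) '' reach B w) := by
  ext q
  constructor
  · rintro ⟨v, hv, rfl⟩
    rcases suffix_append_singleton hv with rfl | ⟨u, hu, rfl⟩
    · exact Set.mem_insert _ _
    · exact Set.mem_insert_of_mem _ ⟨B.evalFrom B.start u, ⟨u, hu, rfl⟩,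
        (B.evalFrom_append_singleton _ _ _).symm⟩
  · rintro (rfl | ⟨p, ⟨u, ⟨t, rfl⟩, rfl⟩, rfl⟩)
    · exact ⟨[], ⟨w ++ [a], by simp⟩, rfl⟩
    · exact ⟨u ++ [a], ⟨t, by simp⟩, B.evalFrom_append_singleton _ _ _⟩

/-- letter-to-function equivalence -/
noncomputable def eqv (m : ℕ) : Fin ((m+2)^(m+2)) ≃ (Fin (m+2) → Fin (m+2)) :=
  (Fintype.equivFinOfCardEq (by simp [Fintype.card_fun])).symm

/-- worst-case n-state DFA -/
noncomputable def Blow (m : ℕ) : DFA (Fin ((m+2)^(m+2))) (Fin (m+2)) where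
  step q a := eqv m a q
  start := 0
  accept := {1}

theorem reach_exists (m : ℕ) : ∀ (c : ℕ) (S : Finset (Fin (m+2))), S.card ≤ c → 0 ∈ S →
    ∃ w, reach (Blow m) w = ↑S := by
  intro c
  induction c with
  | zero =>
    intro S hc h0
    rw [Nat.le_zero, Finset.card_eq_zero] at hc
    simp [hc] at h0
  | succ c ih =>
    intro S hc h0
    by_cases h1 : S.card ≤ 1
    · obtain ⟨x, rfl⟩ := Finset.card_eq_one.mp (le_antisymm h1 (Finset.card_pos.mpr ⟨0, h0⟩))
      obtain rfl : x = 0 := (Finset.mem_singleton.mp h0).symm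
      refine ⟨[], ?_⟩
      rw [reach_nil]
      simp [Blow]
    · push_neg at h1
      obtain ⟨s, hs, hs0⟩ := Finset.exists_mem_ne h1 0
      have h0' : (0 : Fin (m+2)) ∈ S.erase s := Finset.mem_erase.mpr ⟨Ne.symm hs0, h0⟩
      obtain ⟨w, hw⟩ := ih (S.erase s)
        (by have := Finset.card_erase_of_mem hs; omega) h0'
      refine ⟨w ++ [(eqv m).symm (Equiv.swap 0 s)], ?_⟩
      rw [reach_append_singleton, hw]
      have hstep : (fun q => (Blow m).step q ((eqv m).symm (Equiv.swap 0 s)))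
          = Equiv.swap 0 s := by
        funext q
        simp [Blow]
      rw [hstep]
      ext x
      simp only [Set.mem_insert_iff, Set.mem_image, Finset.coe_erase, Set.mem_diff,
        Finset.mem_coe, Set.mem_singleton_iff]
      show _ ↔ x ∈ S
      constructor
      · rintro (rfl | ⟨y, ⟨hyS, hys⟩, rfl⟩)
        · exact h0
        · rcases eq_or_ne y 0 with rfl | hy0
          · rwa [Equiv.swap_apply_left]
          · rwa [Equiv.swap_apply_of_ne_of_ne hy0 hys]
      · intro hx
        rcases eq_or_ne x 0 with rfl | hx0
        · exact Or.inl rfl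
        · rcases eq_or_ne x s with rfl | hxs
          · exact Or.inr ⟨0, ⟨h0, Ne.symm hs0⟩, Equiv.swap_apply_left 0 x⟩
          · exact Or.inr ⟨x, ⟨hx, hxs⟩, Equiv.swap_apply_of_ne_of_ne hx0 hxs⟩

/-- the distinguishing letter for state q -/
noncomputable def dletter (m : ℕ) (q : Fin (m+2)) : Fin ((m+2)^(m+2)) :=
  (eqv m).symm (fun p => if p = q then 1 else 0)

theorem key_distinguish (m : ℕ) (S : Finset (Fin (m+2))) (h0 : 0 ∈ S) (q : Fin (m+2))
    (w : List (Fin ((m+2)^(m+2)))) (hw : reach (Blow m) w = ↑S) :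
    (w ++ [dletter m q] ∈ (⊤ : Language (Fin ((m+2)^(m+2)))) * (Blow m).accepts) ↔ q ∈ S := by
  rw [mem_top_mul_accepts, reach_append_singleton, hw]
  have hstep : (fun p => (Blow m).step p (dletter m q)) =
      (fun p : Fin (m+2) => if p = q then 1 else 0) := by
    funext p
    simp [Blow, dletter]
  rw [hstep]
  have h10 : (1 : Fin (m+2)) ≠ 0 := by
    simp [Fin.ext_iff]
  constructor
  · rintro ⟨x, (rfl | ⟨p, hp, rfl⟩), hx⟩
    · exact absurd ((by simpa [Blow] using hx) : (0 : Fin (m+2)) = 1) h10.symm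
    · have hx' : (if p = q then (1 : Fin (m+2)) else 0) = 1 := by simpa [Blow] using hx
      by_cases hpq : p = q
      · exact hpq ▸ hp
      · rw [if_neg hpq] at hx'
        exact absurd hx'.symm h10
  · intro hq
    refine ⟨1, Or.inr ⟨q, hq, if_pos rfl⟩, rfl⟩

set_option maxHeartbeats 800000 in
/-- For L₁ accepted by a 1-state DFA and L₂ by an n-state DFA (n ≥ 1), L₁^R·L₂ is accepted
    by a DFA with at most 2^(n-1) states, and this bound is tight in the worst case. -/
theorem revcat_m_eq_one (n : ℕ) (hn : 1 ≤ n) :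
    (∀ (α σ₁ σ₂ : Type) (i₁ : Fintype σ₁) (i₂ : Fintype σ₂)
        (A : DFA α σ₁) (B : DFA α σ₂),
      @Fintype.card σ₁ i₁ = 1 → @Fintype.card σ₂ i₂ = n →
      ∃ (σ : Type) (inst : Fintype σ) (C : DFA α σ),
        C.accepts = revLang A.accepts * B.accepts ∧
        @Fintype.card σ inst ≤ 2 ^ (n - 1)) ∧
    (∃ (k : ℕ) (A : DFA (Fin k) (Fin 1)) (B : DFA (Fin k) (Fin n)),
      ∀ (σ : Type) (inst : Fintype σ) (C : DFA (Fin k) σ),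
        C.accepts = revLang A.accepts * B.accepts →
        2 ^ (n - 1) ≤ @Fintype.card σ inst) := by
  constructor
  · -- upper bound
    intro α σ₁ σ₂ i₁ i₂ A B h1 h2
    letI := i₁; letI := i₂
    letI : DecidableEq σ₂ := Classical.decEq σ₂
    haveI : Subsingleton σ₁ := Fintype.card_le_one_iff_subsingleton.mp h1.le
    have hsub : ∀ w : List α, A.eval w = A.start := fun w => Subsingleton.elim _ _
    by_cases hA : A.start ∈ A.accept
    · have hrev : revLang A.accepts = (⊤ : Language α) := by
        ext w
        simp only [revLang, Set.mem_setOf_eq]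
        exact iff_of_true (by show w.reverse ∈ A.accepts; rw [DFA.mem_accepts, hsub]; exact hA) trivial
      refine ⟨{S : Finset σ₂ // B.start ∈ S}, inferInstance, suffDFA B, ?_, ?_⟩
      · rw [hrev]; exact suffDFA_accepts B
      · rw [card_finset_mem, h2]
    · have hrev : revLang A.accepts = (0 : Language α) := by
        ext w
        simp only [revLang, Set.mem_setOf_eq]
        exact iff_of_false (by show w.reverse ∉ A.accepts; rw [DFA.mem_accepts, hsub]; exact hA) (Language.notMem_zero w)
      refine ⟨Fin 1, inferInstance, ⟨fun _ _ => 0, 0, ∅⟩, ?_, ?_⟩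
      · rw [hrev, zero_mul]
        ext w
        simp only [DFA.mem_accepts]
        exact iff_of_false (fun h => h) (Language.notMem_zero w)
      · simpa using Nat.one_le_two_pow
  · -- lower bound
    rcases n with _ | _ | m
    · omega
    · -- n = 1
      refine ⟨1, ⟨fun _ _ => 0, 0, Set.univ⟩, ⟨fun _ _ => 0, 0, Set.univ⟩, ?_⟩
      intro σ inst C _
      letI := inst
      haveI : Nonempty σ := ⟨C.start⟩
      simpa [Nat.one_le_iff_ne_zero] using (Fintype.card_pos (α := σ)).ne'
    · -- n = m + 2
      refine ⟨(m+2)^(m+2), ⟨fun _ _ => 0, 0, Set.univ⟩, Blow m, ?_⟩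
      intro σ inst C hC
      letI := inst
      have hA : revLang ((⟨fun _ _ => 0, 0, Set.univ⟩ :
            DFA (Fin ((m+2)^(m+2))) (Fin 1)).accepts)
          = (⊤ : Language (Fin ((m+2)^(m+2)))) := by
        ext w
        exact iff_of_true trivial trivial
      rw [hA] at hC
      have hword : ∀ S : {S : Finset (Fin (m+2)) // 0 ∈ S},
          ∃ w, reach (Blow m) w = ↑S.1 :=
        fun S => reach_exists m S.1.card S.1 le_rfl S.2
      choose wrd hwrd using hword
      have claim : ∀ (T T' : {S : Finset (Fin (m+2)) // 0 ∈ S}),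
          C.eval (wrd T) = C.eval (wrd T') → ∀ q, q ∈ T.1 → q ∈ T'.1 := by
        intro T T' h q hq
        have h1 : wrd T ++ [dletter m q] ∈ C.accepts := by
          rw [hC, key_distinguish m T.1 T.2 q (wrd T) (hwrd T)]
          exact hq
        have h2 : wrd T' ++ [dletter m q] ∈ C.accepts := by
          rw [DFA.mem_accepts, DFA.eval_append_singleton, ← h]
          rw [DFA.mem_accepts, DFA.eval_append_singleton] at h1
          exact h1
        rw [hC, key_distinguish m T'.1 T'.2 q (wrd T') (hwrd T')] at h2
        exact h2
      have hinj : Function.Injective (fun T : {S : Finset (Fin (m+2)) // 0 ∈ S} =>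
          C.eval (wrd T)) := by
        intro T T' h
        exact Subtype.ext (Finset.ext fun q => ⟨claim T T' h q, claim T' T h.symm q⟩)
      have hcard := Fintype.card_le_of_injective _ hinj
      rw [card_finset_mem, Fintype.card_fin] at hcard
      simpa using hcard
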